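/- arXiv:2601.22107 — 2 statements merged into one kernel-verified Lean document; each statement's English description precedes it below -/
import Mathlib

section
/- (Theorem 1, line-integral form.) Let N be a positive natural number. Let f_prior : ℝ^{N×N} → ℝ^{N×N} be permutation-equivariant, and let v : ℝ^{N×N} × [0,1] → ℝ^{N×N} be permutation-equivariant in its first argument (v(Pᵀ X P, t) = Pᵀ v(X, t) P for every permutation matrix P, every X, and every t) and such that t ↦ ⟨v(A_t, t), A₁ − A₀⟩_F is integrable on [0,1] along the paths considered. For A₁, ξ ∈ ℝ^{N×N}, set A₀ = ξ ⊙ A₁ + (J − ξ) ⊙ f_prior(ξ ⊙ A₁), A_t = (1 − t) A₀ + t A₁, and define F(A₁, ξ) = −∫₀¹ ⟨v(A_t, t), A₁ − A₀⟩_F dt. Then for every N × N permutation matrix P, F(Pᵀ A₁ P, Pᵀ ξ P) = F(A₁, ξ); that is, the line-integral functional defining the estimated log-density is permutation-invariant. -/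
open scoped Matrix
open MeasureTheory

/-- `P` is the permutation matrix of some permutation `σ` of `Fin N`. -/
def IsPermMatrix {N : ℕ} (P : Matrix (Fin N) (Fin N) ℝ) : Prop :=
  ∃ σ : Equiv.Perm (Fin N), ∀ i j, P i j = if σ i = j then 1 else 0

/-- The all-ones `N × N` matrix. -/
def allOnes (N : ℕ) : Matrix (Fin N) (Fin N) ℝ := Matrix.of fun _ _ => 1

/-- The prior-informed initialization
`A₀(A₁, ξ) = ξ ⊙ A₁ + (J − ξ) ⊙ f_prior(ξ ⊙ A₁)`. -/
def priorInit {N : ℕ} (fprior : Matrix (Fin N) (Fin N) ℝ → Matrix (Fin N) (Fin N) ℝ)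
    (A₁ ξ : Matrix (Fin N) (Fin N) ℝ) : Matrix (Fin N) (Fin N) ℝ :=
  ξ ⊙ A₁ + (allOnes N - ξ) ⊙ fprior (ξ ⊙ A₁)

/-- The Frobenius inner product `⟨X, Y⟩_F = tr(Xᵀ Y)`. -/
def frobInner {N : ℕ} (X Y : Matrix (Fin N) (Fin N) ℝ) : ℝ :=
  Matrix.trace (Xᵀ * Y)

/-- The line-integral functional
`F(A₁, ξ) = −∫₀¹ ⟨v(A_t, t), A₁ − A₀⟩_F dt` along the prior-informed
rectified-flow path `A_t = (1 − t) A₀ + t A₁`. -/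
noncomputable def lineIntegralF {N : ℕ}
    (fprior : Matrix (Fin N) (Fin N) ℝ → Matrix (Fin N) (Fin N) ℝ)
    (v : Matrix (Fin N) (Fin N) ℝ → ℝ → Matrix (Fin N) (Fin N) ℝ)
    (A₁ ξ : Matrix (Fin N) (Fin N) ℝ) : ℝ :=
  -∫ t in (0:ℝ)..1,
    frobInner (v ((1 - t) • priorInit fprior A₁ ξ + t • A₁) t) (A₁ - priorInit fprior A₁ ξ)


lemma permConj_eq_submatrix {N : ℕ} (σ : Equiv.Perm (Fin N)) (Q : Matrix (Fin N) (Fin N) ℝ)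
    (hQ : ∀ i j, Q i j = if σ i = j then 1 else 0) (X : Matrix (Fin N) (Fin N) ℝ) :
    Qᵀ * X * Q = X.submatrix σ.symm σ.symm := by
  have hQ' : Q = (Equiv.toPEquiv σ).toMatrix := by
    ext i j; rw [hQ]; simp [PEquiv.toMatrix, Equiv.toPEquiv, eq_comm]
  have hT : Qᵀ = (Equiv.toPEquiv σ.symm).toMatrix := by
    rw [hQ', Equiv.toPEquiv_symm, PEquiv.toMatrix_symm]
  rw [hT, hQ', PEquiv.toMatrix_toPEquiv_mul, PEquiv.mul_toMatrix_toPEquiv]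
  rfl

lemma frobInner_submatrix {N : ℕ} (e : Equiv.Perm (Fin N)) (X Y : Matrix (Fin N) (Fin N) ℝ) :
    frobInner (X.submatrix e e) (Y.submatrix e e) = frobInner X Y := by
  unfold frobInner
  simp only [Matrix.trace, Matrix.diag, Matrix.mul_apply, Matrix.transpose_apply,
    Matrix.submatrix_apply]
  rw [← Equiv.sum_comp e (fun i => ∑ x, X x i * Y x i)]
  exact Finset.sum_congr rfl fun i _ => (Equiv.sum_comp e fun x => X x (e i) * Y x (e i))

lemma hadamard_submatrix {N : ℕ} (e : Equiv.Perm (Fin N)) (X Y : Matrix (Fin N) (Fin N) ℝ) :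
    (X ⊙ Y).submatrix e e = X.submatrix e e ⊙ Y.submatrix e e := by
  ext i j; simp [Matrix.hadamard]

/-- Theorem 1, line-integral form: if the prior is permutation-equivariant and
the velocity field is permutation-equivariant in its first argument (and the
Frobenius integrand is integrable along the paths considered), then the
line-integral functional defining the estimated log-density is
permutation-invariant. -/
theorem lineIntegralF_perm_invariant (N : ℕ) (hN : 0 < N)
    (fprior : Matrix (Fin N) (Fin N) ℝ → Matrix (Fin N) (Fin N) ℝ)
    (v : Matrix (Fin N) (Fin N) ℝ → ℝ → Matrix (Fin N) (Fin N) ℝ)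
    (hfprior : ∀ Q : Matrix (Fin N) (Fin N) ℝ, IsPermMatrix Q →
      ∀ X : Matrix (Fin N) (Fin N) ℝ, fprior (Qᵀ * X * Q) = Qᵀ * fprior X * Q)
    (hv : ∀ Q : Matrix (Fin N) (Fin N) ℝ, IsPermMatrix Q →
      ∀ (X : Matrix (Fin N) (Fin N) ℝ) (t : ℝ), t ∈ Set.Icc (0:ℝ) 1 →
        v (Qᵀ * X * Q) t = Qᵀ * v X t * Q)
    (hint : ∀ A₁ ξ : Matrix (Fin N) (Fin N) ℝ,
      IntervalIntegrable
        (fun t => frobInner (v ((1 - t) • priorInit fprior A₁ ξ + t • A₁) t)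
          (A₁ - priorInit fprior A₁ ξ)) volume 0 1)
    (A₁ ξ : Matrix (Fin N) (Fin N) ℝ)
    (P : Matrix (Fin N) (Fin N) ℝ) (hP : IsPermMatrix P) :
    lineIntegralF fprior v (Pᵀ * A₁ * P) (Pᵀ * ξ * P) = lineIntegralF fprior v A₁ ξ := by
  obtain ⟨σ, hσ⟩ := hP
  set e : Equiv.Perm (Fin N) := σ.symm with he
  have hconj : ∀ X : Matrix (Fin N) (Fin N) ℝ, Pᵀ * X * P = X.submatrix e e :=
    permConj_eq_submatrix σ P hσ
  have hones : (allOnes N).submatrix (⇑e) (⇑e) = allOnes N := by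
    ext i j; simp [allOnes]
  have hprior : priorInit fprior (A₁.submatrix e e) (ξ.submatrix e e)
      = (priorInit fprior A₁ ξ).submatrix e e := by
    have hf : fprior ((ξ ⊙ A₁).submatrix e e) = (fprior (ξ ⊙ A₁)).submatrix e e := by
      rw [← hconj, hfprior P ⟨σ, hσ⟩, hconj]
    unfold priorInit
    rw [← hadamard_submatrix, hf]
    ext i j
    simp [Matrix.hadamard, allOnes]
  set B := priorInit fprior A₁ ξ with hB
  unfold lineIntegralF
  rw [hconj, hconj, hprior]
  congr 1
  apply intervalIntegral.integral_congr
  intro t ht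
  rw [Set.uIcc_of_le (zero_le_one)] at ht
  have hpath : (1 - t) • B.submatrix ⇑e ⇑e + t • A₁.submatrix ⇑e ⇑e
      = ((1 - t) • B + t • A₁).submatrix ⇑e ⇑e := by
    ext i j; simp
  have hvs : v (((1 - t) • B + t • A₁).submatrix ⇑e ⇑e) t
      = (v ((1 - t) • B + t • A₁) t).submatrix ⇑e ⇑e := by
    rw [← hconj, hv P ⟨σ, hσ⟩ _ t ht, hconj]
  have hdiff : A₁.submatrix ⇑e ⇑e - B.submatrix ⇑e ⇑e = (A₁ - B).submatrix ⇑e ⇑e := by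
    ext i j; simp
  simp only [hpath, hvs, hdiff, frobInner_submatrix]
  rfl
end

section
/- (Theorem 1, divergence form.) Let N be a positive natural number. Let g : ℝ^{N×N} → ℝ be permutation-invariant (g(Pᵀ X P) = g(X) for every permutation matrix P and every X), let f_prior : ℝ^{N×N} → ℝ^{N×N} be permutation-equivariant, and let v : ℝ^{N×N} × [0,1] → ℝ^{N×N} be permutation-equivariant in its first argument and continuously Fréchet differentiable in its first argument. For A₁, ξ ∈ ℝ^{N×N}, set A₀ = ξ ⊙ A₁ + (J − ξ) ⊙ f_prior(ξ ⊙ A₁), A_t = (1 − t) A₀ + t A₁, and define the estimated log-density L(A₁, ξ) = g(A₀) − ∫₀¹ tr(D₁v(A_t, t)) dt, where D₁v(·, t) is the Fréchet derivative of v(·, t) viewed as a linear endomorphism of ℝ^{N×N}. Then for every N × N permutation matrix P, L(Pᵀ A₁ P, Pᵀ ξ P) = L(A₁, ξ); that is, the estimated density is permutation-invariant. -/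
open scoped Matrix
open MeasureTheory

attribute [local instance] Matrix.normedAddCommGroup Matrix.normedSpace

/-- The estimated log-density
`L(A₁, ξ) = g(A₀) − ∫₀¹ tr(D₁v(A_t, t)) dt` along the prior-informed
rectified-flow path `A_t = (1 − t) A₀ + t A₁`, where `D₁v(·, t)` is the
Fréchet derivative of `v(·, t)` viewed as a linear endomorphism. -/
noncomputable def estLogDensity {N : ℕ}
    (g : Matrix (Fin N) (Fin N) ℝ → ℝ)
    (fprior : Matrix (Fin N) (Fin N) ℝ → Matrix (Fin N) (Fin N) ℝ)
    (v : Matrix (Fin N) (Fin N) ℝ → ℝ → Matrix (Fin N) (Fin N) ℝ)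
    (A₁ ξ : Matrix (Fin N) (Fin N) ℝ) : ℝ :=
  g (priorInit fprior A₁ ξ) -
    ∫ t in (0:ℝ)..1,
      LinearMap.trace ℝ (Matrix (Fin N) (Fin N) ℝ)
        ((fderiv ℝ (fun X => v X t) ((1 - t) • priorInit fprior A₁ ξ + t • A₁)) :
          Matrix (Fin N) (Fin N) ℝ →ₗ[ℝ] Matrix (Fin N) (Fin N) ℝ)

section Aux

variable {N : ℕ}

lemma permConj_apply {σ : Equiv.Perm (Fin N)} {Q : Matrix (Fin N) (Fin N) ℝ}
    (hQ : ∀ i j, Q i j = if σ i = j then 1 else 0) (X : Matrix (Fin N) (Fin N) ℝ)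
    (i j : Fin N) : (Qᵀ * X * Q) i j = X (σ.symm i) (σ.symm j) := by
  simp only [Matrix.mul_apply, Matrix.transpose_apply, hQ,
    Equiv.apply_eq_iff_eq_symm_apply, ite_mul, one_mul, zero_mul,
    mul_ite, mul_one, mul_zero]
  simp

lemma permConj_hadamard {σ : Equiv.Perm (Fin N)} {Q : Matrix (Fin N) (Fin N) ℝ}
    (hQ : ∀ i j, Q i j = if σ i = j then 1 else 0) (X Y : Matrix (Fin N) (Fin N) ℝ) :
    (Qᵀ * X * Q) ⊙ (Qᵀ * Y * Q) = Qᵀ * (X ⊙ Y) * Q := by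
  ext i j
  simp [Matrix.hadamard_apply, permConj_apply hQ]

lemma permConj_allOnes {σ : Equiv.Perm (Fin N)} {Q : Matrix (Fin N) (Fin N) ℝ}
    (hQ : ∀ i j, Q i j = if σ i = j then 1 else 0) :
    Qᵀ * allOnes N * Q = allOnes N := by
  ext i j
  simp [permConj_apply hQ, allOnes]

lemma perm_mul_transpose {σ : Equiv.Perm (Fin N)} {Q : Matrix (Fin N) (Fin N) ℝ}
    (hQ : ∀ i j, Q i j = if σ i = j then 1 else 0) :
    Qᵀ * Q = 1 ∧ Q * Qᵀ = 1 := by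
  constructor
  · ext i j
    rw [Matrix.mul_apply]
    simp only [Matrix.transpose_apply, hQ, Matrix.one_apply]
    rw [Finset.sum_eq_single (σ.symm i)]
    · simp [Equiv.apply_symm_apply]
    · intro k _ hk
      rw [if_neg, zero_mul]
      intro h; exact hk (by rw [← h, Equiv.symm_apply_apply])
    · intro h; exact absurd (Finset.mem_univ _) h
  · ext i j
    rw [Matrix.mul_apply]
    simp only [Matrix.transpose_apply, hQ, Matrix.one_apply]
    rw [Finset.sum_eq_single (σ i)]
    · simp [EmbeddingLike.apply_eq_iff_eq, eq_comm]
    · intro k _ hk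
      rw [if_neg (by exact fun h => hk h.symm), zero_mul]
    · intro h; exact absurd (Finset.mem_univ _) h

/-- Conjugation by a permutation matrix as a linear equivalence. -/
noncomputable def permConjEquiv {σ : Equiv.Perm (Fin N)} {Q : Matrix (Fin N) (Fin N) ℝ}
    (hQ : ∀ i j, Q i j = if σ i = j then 1 else 0) :
    Matrix (Fin N) (Fin N) ℝ ≃ₗ[ℝ] Matrix (Fin N) (Fin N) ℝ where
  toFun X := Qᵀ * X * Q
  invFun X := Q * X * Qᵀ
  map_add' X Y := by noncomm_ring
  map_smul' c X := by simp [Matrix.mul_smul, Matrix.smul_mul]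
  left_inv X := by
    obtain ⟨h1, h2⟩ := perm_mul_transpose hQ
    calc Q * (Qᵀ * X * Q) * Qᵀ = (Q * Qᵀ) * X * (Q * Qᵀ) := by noncomm_ring
    _ = X := by rw [h2]; simp
  right_inv X := by
    obtain ⟨h1, h2⟩ := perm_mul_transpose hQ
    calc Qᵀ * (Q * X * Qᵀ) * Q = (Qᵀ * Q) * X * (Qᵀ * Q) := by noncomm_ring
    _ = X := by rw [h1]; simp

lemma permConj_priorInit {σ : Equiv.Perm (Fin N)} {Q : Matrix (Fin N) (Fin N) ℝ}
    (hQ : ∀ i j, Q i j = if σ i = j then 1 else 0)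
    (fprior : Matrix (Fin N) (Fin N) ℝ → Matrix (Fin N) (Fin N) ℝ)
    (hfprior : ∀ X, fprior (Qᵀ * X * Q) = Qᵀ * fprior X * Q)
    (A₁ ξ : Matrix (Fin N) (Fin N) ℝ) :
    priorInit fprior (Qᵀ * A₁ * Q) (Qᵀ * ξ * Q) = Qᵀ * priorInit fprior A₁ ξ * Q := by
  have hsub : Qᵀ * (allOnes N - ξ) * Q = allOnes N - Qᵀ * ξ * Q := by
    rw [Matrix.mul_sub, Matrix.sub_mul, permConj_allOnes hQ]
  unfold priorInit
  rw [permConj_hadamard hQ, hfprior, ← hsub, permConj_hadamard hQ]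
  noncomm_ring

end Aux

/-- Theorem 1, divergence form: if `g` is permutation-invariant, the prior
is permutation-equivariant, and the velocity field is permutation-equivariant
and continuously Fréchet differentiable in its first argument, then the
estimated log-density is permutation-invariant. -/
theorem estLogDensity_perm_invariant (N : ℕ) (hN : 0 < N)
    (g : Matrix (Fin N) (Fin N) ℝ → ℝ)
    (fprior : Matrix (Fin N) (Fin N) ℝ → Matrix (Fin N) (Fin N) ℝ)
    (v : Matrix (Fin N) (Fin N) ℝ → ℝ → Matrix (Fin N) (Fin N) ℝ)
    (hg : ∀ Q : Matrix (Fin N) (Fin N) ℝ, IsPermMatrix Q →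
      ∀ X : Matrix (Fin N) (Fin N) ℝ, g (Qᵀ * X * Q) = g X)
    (hfprior : ∀ Q : Matrix (Fin N) (Fin N) ℝ, IsPermMatrix Q →
      ∀ X : Matrix (Fin N) (Fin N) ℝ, fprior (Qᵀ * X * Q) = Qᵀ * fprior X * Q)
    (hv : ∀ Q : Matrix (Fin N) (Fin N) ℝ, IsPermMatrix Q →
      ∀ (X : Matrix (Fin N) (Fin N) ℝ) (t : ℝ), v (Qᵀ * X * Q) t = Qᵀ * v X t * Q)
    (hvdiff : ∀ t : ℝ, ContDiff ℝ 1 (fun X => v X t))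
    (A₁ ξ : Matrix (Fin N) (Fin N) ℝ)
    (P : Matrix (Fin N) (Fin N) ℝ) (hP : IsPermMatrix P) :
    estLogDensity g fprior v (Pᵀ * A₁ * P) (Pᵀ * ξ * P) =
      estLogDensity g fprior v A₁ ξ := by
  obtain ⟨σ, hQ⟩ := hP
  have hPperm : IsPermMatrix P := ⟨σ, hQ⟩
  set e : Matrix (Fin N) (Fin N) ℝ ≃ₗ[ℝ] Matrix (Fin N) (Fin N) ℝ := permConjEquiv hQ
  let eL : Matrix (Fin N) (Fin N) ℝ ≃L[ℝ] Matrix (Fin N) (Fin N) ℝ :=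
    e.toContinuousLinearEquiv
  have he : ∀ X, eL X = Pᵀ * X * P := fun X => rfl
  have hprior : priorInit fprior (Pᵀ * A₁ * P) (Pᵀ * ξ * P) =
      Pᵀ * priorInit fprior A₁ ξ * P :=
    permConj_priorInit hQ fprior (hfprior P hPperm) A₁ ξ
  unfold estLogDensity
  rw [hprior, hg P hPperm]
  congr 1
  apply intervalIntegral.integral_congr
  intro t _
  dsimp only
  set A := (1 - t) • priorInit fprior A₁ ξ + t • A₁ with hA
  have hAt : (1 - t) • (Pᵀ * priorInit fprior A₁ ξ * P) + t • (Pᵀ * A₁ * P) = eL A := by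
    rw [he]
    simp [hA, Matrix.mul_add, Matrix.add_mul, Matrix.mul_smul, Matrix.smul_mul]
  rw [hAt]
  -- identify the derivative at `eL A` as a conjugate of the derivative at `A`
  have hdiff : Differentiable ℝ (fun X => v X t) := (hvdiff t).differentiable one_ne_zero
  have hfun : (fun X => v X t) ∘ eL = eL ∘ (fun X => v X t) := by
    funext X
    simp only [Function.comp_apply, he]
    exact hv P hPperm X t
  have hfd : fderiv ℝ (fun X => v X t) (eL A) =
      (eL : Matrix (Fin N) (Fin N) ℝ →L[ℝ] Matrix (Fin N) (Fin N) ℝ).comp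
        ((fderiv ℝ (fun X => v X t) A).comp
          (eL.symm : Matrix (Fin N) (Fin N) ℝ →L[ℝ] Matrix (Fin N) (Fin N) ℝ)) := by
    have h1 := eL.comp_right_fderiv (f := fun X => v X t) (x := eL.symm (eL A))
    erw [hfun] at h1
    have h2 := eL.comp_fderiv (f := fun X => v X t) (x := eL.symm (eL A))
    simp only [eL.apply_symm_apply, eL.symm_apply_apply] at h1 h2
    erw [h1] at h2
    refine ContinuousLinearMap.ext fun Y => ?_
    have h3 := DFunLike.congr_fun h2 (eL.symm Y)
    have h4 : Y = eL (eL.symm Y) := (eL.apply_symm_apply Y).symm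
    conv_lhs => rw [h4]
    exact h3
  rw [hfd]
  have : (((eL : Matrix (Fin N) (Fin N) ℝ →L[ℝ] Matrix (Fin N) (Fin N) ℝ).comp
        ((fderiv ℝ (fun X => v X t) A).comp
          (eL.symm : Matrix (Fin N) (Fin N) ℝ →L[ℝ] Matrix (Fin N) (Fin N) ℝ))) :
      Matrix (Fin N) (Fin N) ℝ →ₗ[ℝ] Matrix (Fin N) (Fin N) ℝ) =
      e.conj ((fderiv ℝ (fun X => v X t) A) :
        Matrix (Fin N) (Fin N) ℝ →ₗ[ℝ] Matrix (Fin N) (Fin N) ℝ) := by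
    ext Y
    simp [LinearEquiv.conj_apply, eL]
  rw [this, LinearMap.trace_conj']
end
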